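/- For a semigroup S and fixed g, h ∈ S¹, the set D_{g,h} = { a ∈ S : gh·a = a·gh = a } is a subsemigroup of S, and the mapping φ_{g,h} : D_{g,h} → S given by a ↦ hag is a semigroup homomorphism from D_{g,h} into D_{h,g} that is inverse to φ_{h,g}; in particular φ_{g,h} is an isomorphism from D_{g,h} onto D_{h,g}. -/

import Mathlib

/-- Membership of `a ∈ S` in `D_{g,h} = { a ∈ S : gh·a = a·gh = a }`. -/
def MemD {S : Type*} [Semigroup S] (g h : WithOne S) (a : S) : Prop :=
  g * h * (a : WithOne S) = (a : WithOne S) ∧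
  (a : WithOne S) * (g * h) = (a : WithOne S)

/-- Any product `x * ↑a * y` in `WithOne S` is again a coercion of an
element of `S`. -/
lemma exists_coe_eq {S : Type*} [Semigroup S] (x y : WithOne S) (a : S) :
    ∃ b : S, (b : WithOne S) = x * (a : WithOne S) * y := by
  induction x using WithOne.recOneCoe with
  | one =>
    induction y using WithOne.recOneCoe with
    | one => exact ⟨a, by simp⟩
    | coe y' => exact ⟨a * y', by simp⟩
  | coe x' =>
    induction y using WithOne.recOneCoe with
    | one => exact ⟨x' * a, by simp⟩
    | coe y' => exact ⟨x' * a * y', by simp [mul_assoc]⟩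

/-- `D_{g,h}` is a subsemigroup of `S`, and the map
`φ_{g,h} : a ↦ hag` is a homomorphism from `D_{g,h}` into `D_{h,g}` which is
mutually inverse with `φ_{h,g}`; hence it is an isomorphism onto `D_{h,g}`. -/
theorem phi_partial_isomorphism {S : Type*} [Semigroup S] (g h : WithOne S) :
    -- D_{g,h} is a subsemigroup
    (∀ a b : S, MemD g h a → MemD g h b → MemD g h (a * b)) ∧
    -- φ_{g,h} maps D_{g,h} into D_{h,g}
    (∀ a : S, MemD g h a →
      ∃ b : S, (b : WithOne S) = h * (a : WithOne S) * g ∧ MemD h g b) ∧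
    -- φ_{g,h} is a homomorphism
    (∀ a b : S, MemD g h a → MemD g h b →
      h * ((a * b : S) : WithOne S) * g =
        (h * (a : WithOne S) * g) * (h * (b : WithOne S) * g)) ∧
    -- φ_{h,g} ∘ φ_{g,h} is the identity on D_{g,h}
    (∀ a : S, MemD g h a →
      g * (h * (a : WithOne S) * g) * h = (a : WithOne S)) ∧
    -- φ_{g,h} ∘ φ_{h,g} is the identity on D_{h,g}
    (∀ b : S, MemD h g b →
      h * (g * (b : WithOne S) * h) * g = (b : WithOne S)) := by
  refine ⟨?_, ?_, ?_, ?_, ?_⟩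
  · rintro a b ⟨ha1, ha2⟩ ⟨hb1, hb2⟩
    constructor
    · push_cast
      rw [← mul_assoc, ha1]
    · push_cast
      rw [mul_assoc, hb2]
  · rintro a ⟨ha1, ha2⟩
    obtain ⟨b, hb⟩ := exists_coe_eq h g a
    refine ⟨b, hb, ?_, ?_⟩
    · rw [hb]
      calc h * g * (h * ↑a * g) = h * (g * h * ↑a) * g := by
            simp only [mul_assoc]
        _ = h * ↑a * g := by rw [ha1]
    · rw [hb]
      calc h * ↑a * g * (h * g) = h * (↑a * (g * h)) * g := by
            simp only [mul_assoc]
        _ = h * ↑a * g := by rw [ha2]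
  · rintro a b ⟨ha1, ha2⟩ ⟨hb1, hb2⟩
    push_cast
    calc h * (↑a * ↑b) * g = h * (↑a * (g * h * ↑b)) * g := by rw [hb1]
      _ = (h * ↑a * g) * (h * ↑b * g) := by simp only [mul_assoc]
  · rintro a ⟨ha1, ha2⟩
    calc g * (h * ↑a * g) * h = g * h * (↑a * (g * h)) := by
          simp only [mul_assoc]
      _ = ↑a := by rw [ha2, ha1]
  · rintro b ⟨hb1, hb2⟩
    calc h * (g * ↑b * h) * g = h * g * (↑b * (h * g)) := by
          simp only [mul_assoc]
      _ = ↑b := by rw [hb2, hb1]
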